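/- arXiv:2210.01390 — 5 statements merged into one kernel-verified Lean document; each statement's English description precedes it below -/
import Mathlib

section
/- For any two density matrices ρ and σ of the same size, 1 − F(ρ,σ) ≤ dist(ρ,σ); that is, one minus the fidelity is a lower bound on the trace distance. (First inequality of Lemma on fidelity/trace-distance relations, item 1.) -/
open scoped Matrix ComplexOrder

/-- The positive semidefinite square root of a matrix (junk value `0` if the matrix is not
positive semidefinite). -/
noncomputable def psdSqrt {m : ℕ} (A : Matrix (Fin m) (Fin m) ℂ) : Matrix (Fin m) (Fin m) ℂ :=
  letI := Classical.dec A.PosSemidef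
  if h : A.PosSemidef then
    (h.1.eigenvectorUnitary : Matrix (Fin m) (Fin m) ℂ) *
      Matrix.diagonal ((↑) ∘ (fun x : ℝ => Real.sqrt x) ∘ h.1.eigenvalues) *
      (star h.1.eigenvectorUnitary : Matrix (Fin m) (Fin m) ℂ)
  else 0

/-- The fidelity `F(ρ,σ) = tr √(√ρ · σ · √ρ)` of two density matrices. -/
noncomputable def fidelity {m : ℕ} (ρ σ : Matrix (Fin m) (Fin m) ℂ) : ℝ :=
  ((psdSqrt (psdSqrt ρ * σ * psdSqrt ρ)).trace).re

/-- The trace distance `dist(ρ,σ) = (1/2)·tr √((ρ−σ)†(ρ−σ))` of two density matrices. -/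
noncomputable def traceDist {m : ℕ} (ρ σ : Matrix (Fin m) (Fin m) ℂ) : ℝ :=
  (1 / 2) * ((psdSqrt ((ρ - σ)ᴴ * (ρ - σ))).trace).re

section Aux

set_option maxHeartbeats 1000000

variable {m : ℕ}

lemma rclike_ofReal_eq : (RCLike.ofReal : ℝ → ℂ) = Complex.ofReal := rfl

noncomputable def Matrix.PosSemidef.sqrt {A : Matrix (Fin m) (Fin m) ℂ} (h : A.PosSemidef) :
    Matrix (Fin m) (Fin m) ℂ :=
  (h.1.eigenvectorUnitary : Matrix (Fin m) (Fin m) ℂ) *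
    Matrix.diagonal ((↑) ∘ (fun x : ℝ => Real.sqrt x) ∘ h.1.eigenvalues) *
    (star h.1.eigenvectorUnitary : Matrix (Fin m) (Fin m) ℂ)

lemma Matrix.PosSemidef.posSemidef_sqrt {A : Matrix (Fin m) (Fin m) ℂ} (h : A.PosSemidef) :
    h.sqrt.PosSemidef := by
  unfold Matrix.PosSemidef.sqrt
  have h1 : (Matrix.diagonal ((↑) ∘ (fun x : ℝ => Real.sqrt x) ∘ h.1.eigenvalues) :
      Matrix (Fin m) (Fin m) ℂ).PosSemidef := by
    rw [Matrix.posSemidef_diagonal_iff]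
    intro i
    exact Complex.zero_le_real.mpr (Real.sqrt_nonneg _)
  have := h1.mul_mul_conjTranspose_same (h.1.eigenvectorUnitary : Matrix (Fin m) (Fin m) ℂ)
  rwa [← Matrix.star_eq_conjTranspose] at this

lemma Matrix.PosSemidef.sqrt_mul_self {A : Matrix (Fin m) (Fin m) ℂ} (h : A.PosSemidef) :
    h.sqrt * h.sqrt = A := by
  unfold Matrix.PosSemidef.sqrt
  set U := h.1.eigenvectorUnitary with hUdef
  set D : Matrix (Fin m) (Fin m) ℂ :=
    Matrix.diagonal ((↑) ∘ (fun x : ℝ => Real.sqrt x) ∘ h.1.eigenvalues) with hD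
  have hU2 : star (U : Matrix (Fin m) (Fin m) ℂ) * (U : Matrix (Fin m) (Fin m) ℂ) = 1 :=
    Matrix.mem_unitaryGroup_iff'.mp U.2
  have e : (U : Matrix (Fin m) (Fin m) ℂ) * D * star (U : Matrix (Fin m) (Fin m) ℂ) *
      ((U : Matrix (Fin m) (Fin m) ℂ) * D * star (U : Matrix (Fin m) (Fin m) ℂ))
      = (U : Matrix (Fin m) (Fin m) ℂ) * (D * D) * star (U : Matrix (Fin m) (Fin m) ℂ) := by
    calc _ = (U : Matrix (Fin m) (Fin m) ℂ) * D *
          ((star (U : Matrix (Fin m) (Fin m) ℂ) * (U : Matrix (Fin m) (Fin m) ℂ)) *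
            (D * star (U : Matrix (Fin m) (Fin m) ℂ))) := by simp only [Matrix.mul_assoc]
      _ = _ := by rw [hU2, Matrix.one_mul]; simp only [Matrix.mul_assoc]
  have hDD : D * D = Matrix.diagonal (RCLike.ofReal ∘ h.1.eigenvalues) := by
    rw [hD, Matrix.diagonal_mul_diagonal]
    apply congrArg Matrix.diagonal
    funext i
    simp only [Function.comp_apply, rclike_ofReal_eq]
    rw [← Complex.ofReal_mul, Real.mul_self_sqrt (h.eigenvalues_nonneg i)]
  rw [e, hDD]
  have := h.1.spectral_theorem
  rw [Unitary.conjStarAlgAut_apply] at this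
  exact this.symm

lemma psdSqrt_of_posSemidef {A : Matrix (Fin m) (Fin m) ℂ} (h : A.PosSemidef) :
    psdSqrt A = h.sqrt := by
  unfold psdSqrt
  exact dif_pos h

lemma psd_trace_re_nonneg {A : Matrix (Fin m) (Fin m) ℂ} (hA : A.PosSemidef) :
    0 ≤ (A.trace).re := by
  rw [Matrix.trace, Complex.re_sum]
  apply Finset.sum_nonneg
  intro i _
  simpa using (Complex.le_def.mp (hA.diag_nonneg (i := i))).1

lemma psd_mul_trace_re_nonneg {A B : Matrix (Fin m) (Fin m) ℂ}
    (hA : A.PosSemidef) (hB : B.PosSemidef) : 0 ≤ ((A * B).trace).re := by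
  have hs := hA.posSemidef_sqrt
  have h1 : (A * B).trace = (hA.sqrt * B * hA.sqrt).trace := by
    conv_lhs => rw [← hA.sqrt_mul_self]
    rw [Matrix.mul_assoc, Matrix.trace_mul_comm, Matrix.mul_assoc]
  rw [h1]
  have h2 : (hA.sqrt * B * hA.sqrtᴴ).PosSemidef := hB.mul_mul_conjTranspose_same hA.sqrt
  rw [hs.1.eq] at h2
  exact psd_trace_re_nonneg h2

lemma trace_unitary_conj (U : Matrix.unitaryGroup (Fin m) ℂ) (D : Matrix (Fin m) (Fin m) ℂ) :
    ((U : Matrix (Fin m) (Fin m) ℂ) * D * star (U : Matrix (Fin m) (Fin m) ℂ)).trace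
      = D.trace := by
  rw [Matrix.trace_mul_comm, ← Matrix.mul_assoc, Matrix.mem_unitaryGroup_iff'.mp U.2,
    Matrix.one_mul]

/-- `Re (tr M) ≤ tr √(Mᴴ M)` for every matrix `M`. -/
lemma trace_re_le_psdSqrt (M : Matrix (Fin m) (Fin m) ℂ) :
    (M.trace).re ≤ ((psdSqrt (Mᴴ * M)).trace).re := by
  have hN : (Mᴴ * M).PosSemidef := Matrix.posSemidef_conjTranspose_mul_self M
  rw [psdSqrt_of_posSemidef hN]
  set N := Mᴴ * M with hNdef
  set U := hN.1.eigenvectorUnitary with hUdef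
  set lam := hN.1.eigenvalues with hlamdef
  have hU1 : (U : Matrix (Fin m) (Fin m) ℂ) * star (U : Matrix (Fin m) (Fin m) ℂ) = 1 :=
    Matrix.mem_unitaryGroup_iff.mp U.2
  have htr : (hN.sqrt).trace = ∑ i, (Real.sqrt (lam i) : ℂ) := by
    rw [Matrix.PosSemidef.sqrt, trace_unitary_conj, Matrix.trace_diagonal]
    rfl
  set P := star (U : Matrix (Fin m) (Fin m) ℂ) * M * (U : Matrix (Fin m) (Fin m) ℂ) with hPdef
  have htrP : P.trace = M.trace := by
    rw [hPdef, Matrix.trace_mul_comm, ← Matrix.mul_assoc, hU1, Matrix.one_mul]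
  have hPP : Pᴴ * P = Matrix.diagonal (RCLike.ofReal ∘ lam) := by
    have h1 : Pᴴ = star (U : Matrix (Fin m) (Fin m) ℂ) * Mᴴ * (U : Matrix (Fin m) (Fin m) ℂ) := by
      simp [hPdef, Matrix.conjTranspose_mul, Matrix.mul_assoc, Matrix.star_eq_conjTranspose]
    rw [h1, hPdef]
    calc star (U : Matrix (Fin m) (Fin m) ℂ) * Mᴴ * (U : Matrix (Fin m) (Fin m) ℂ) *
          (star (U : Matrix (Fin m) (Fin m) ℂ) * M * (U : Matrix (Fin m) (Fin m) ℂ))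
        = star (U : Matrix (Fin m) (Fin m) ℂ) * Mᴴ *
            (((U : Matrix (Fin m) (Fin m) ℂ) * star (U : Matrix (Fin m) (Fin m) ℂ)) *
              (M * (U : Matrix (Fin m) (Fin m) ℂ))) := by
          simp only [Matrix.mul_assoc]
      _ = star (U : Matrix (Fin m) (Fin m) ℂ) * N * (U : Matrix (Fin m) (Fin m) ℂ) := by
          rw [hU1, Matrix.one_mul, hNdef]; simp only [Matrix.mul_assoc]
      _ = Matrix.diagonal (RCLike.ofReal ∘ lam) := by
          have := hN.1.conjStarAlgAut_star_eigenvectorUnitary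
          simpa [Unitary.conjStarAlgAut_apply] using this
  have key : ∀ i, (P i i).re ≤ Real.sqrt (lam i) := by
    intro i
    have hdiag : (Pᴴ * P) i i = (lam i : ℂ) := by
      rw [hPP]; simp
    have hsum : ∑ j, Complex.normSq (P j i) = lam i := by
      have h3 : (Pᴴ * P) i i = ∑ j, (Complex.normSq (P j i) : ℂ) := by
        rw [Matrix.mul_apply]
        congr 1; ext j
        rw [Matrix.conjTranspose_apply, Complex.star_def, mul_comm, Complex.mul_conj]
      rw [h3] at hdiag
      exact_mod_cast hdiag
    have h1 : Complex.normSq (P i i) ≤ lam i := by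
      rw [← hsum]
      exact Finset.single_le_sum (f := fun j => Complex.normSq (P j i))
        (fun j _ => Complex.normSq_nonneg _) (Finset.mem_univ i)
    calc (P i i).re ≤ ‖P i i‖ := Complex.re_le_norm _
      _ = Real.sqrt (Complex.normSq (P i i)) := Complex.norm_def _
      _ ≤ Real.sqrt (lam i) := Real.sqrt_le_sqrt h1
  rw [← htrP, htr]
  rw [Matrix.trace, Complex.re_sum, Complex.re_sum]
  apply Finset.sum_le_sum
  intro i _
  simpa using key i

/-- Powers–Størmer-type inequality: `tr ((a-b)²) ≤ tr |a² - b²|` for psd `a`, `b`. -/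
lemma powers_stormer {a b : Matrix (Fin m) (Fin m) ℂ}
    (ha : a.PosSemidef) (hb : b.PosSemidef) :
    (((a - b) * (a - b)).trace).re
      ≤ ((psdSqrt ((a * a - b * b)ᴴ * (a * a - b * b))).trace).re := by
  set X := a - b with hXdef
  set C := a * a - b * b with hCdef
  have hX : X.IsHermitian := ha.1.sub hb.1
  set U := hX.eigenvectorUnitary with hUdef
  set mu := hX.eigenvalues with hmudef
  have hU1 : (U : Matrix (Fin m) (Fin m) ℂ) * star (U : Matrix (Fin m) (Fin m) ℂ) = 1 :=
    Matrix.mem_unitaryGroup_iff.mp U.2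
  have hU2 : star (U : Matrix (Fin m) (Fin m) ℂ) * (U : Matrix (Fin m) (Fin m) ℂ) = 1 :=
    Matrix.mem_unitaryGroup_iff'.mp U.2
  set s : Fin m → ℝ := fun i => if 0 ≤ mu i then 1 else -1 with hsdef
  set Dabs : Matrix (Fin m) (Fin m) ℂ := Matrix.diagonal (fun i => ((|mu i| : ℝ) : ℂ)) with hDabs
  set Ds : Matrix (Fin m) (Fin m) ℂ := Matrix.diagonal (fun i => ((s i : ℝ) : ℂ)) with hDs
  set absX := (U : Matrix (Fin m) (Fin m) ℂ) * Dabs * star (U : Matrix (Fin m) (Fin m) ℂ)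
    with habsX
  set W := (U : Matrix (Fin m) (Fin m) ℂ) * Ds * star (U : Matrix (Fin m) (Fin m) ℂ) with hW
  have hspec : X = (U : Matrix (Fin m) (Fin m) ℂ) *
      Matrix.diagonal (RCLike.ofReal ∘ mu) * star (U : Matrix (Fin m) (Fin m) ℂ) :=
    by have := hX.spectral_theorem; rwa [Unitary.conjStarAlgAut_apply] at this
  -- absX - X and absX + X are psd
  have hdiagpsd : ∀ (d : Fin m → ℝ), (∀ i, 0 ≤ d i) →
      (((U : Matrix (Fin m) (Fin m) ℂ) * Matrix.diagonal (fun i => ((d i : ℝ) : ℂ)) *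
        star (U : Matrix (Fin m) (Fin m) ℂ)).PosSemidef) := by
    intro d hd
    have h1 : (Matrix.diagonal (fun i => ((d i : ℝ) : ℂ))).PosSemidef := by
      rw [Matrix.posSemidef_diagonal_iff]
      intro i
      exact_mod_cast Complex.zero_le_real.mpr (hd i)
    have := h1.mul_mul_conjTranspose_same (U : Matrix (Fin m) (Fin m) ℂ)
    rwa [← Matrix.star_eq_conjTranspose] at this
  have hsub : (absX - X).PosSemidef := by
    have heq : absX - X = (U : Matrix (Fin m) (Fin m) ℂ) *
        Matrix.diagonal (fun i => ((|mu i| - mu i : ℝ) : ℂ)) *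
        star (U : Matrix (Fin m) (Fin m) ℂ) := by
      rw [habsX, hspec, ← Matrix.sub_mul, ← Matrix.mul_sub, Matrix.diagonal_sub]
      congr 2
      ext i
      push_cast
      rfl
    rw [heq]
    exact hdiagpsd _ (fun i => by simp [sub_nonneg, le_abs_self])
  have hadd : (absX + X).PosSemidef := by
    have heq : absX + X = (U : Matrix (Fin m) (Fin m) ℂ) *
        Matrix.diagonal (fun i => ((|mu i| + mu i : ℝ) : ℂ)) *
        star (U : Matrix (Fin m) (Fin m) ℂ) := by
      rw [habsX, hspec, ← Matrix.add_mul, ← Matrix.mul_add, Matrix.diagonal_add]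
      congr 2
      ext i
      push_cast
      rfl
    rw [heq]
    exact hdiagpsd _ (fun i => by linarith [neg_abs_le (mu i)])
  -- W * X = absX = X * W
  have hDsmu : Ds * Matrix.diagonal (RCLike.ofReal ∘ mu) = Dabs := by
    rw [hDs, hDabs, Matrix.diagonal_mul_diagonal]
    apply congrArg Matrix.diagonal
    funext i
    simp only [Function.comp_apply, hsdef, rclike_ofReal_eq]
    split_ifs with h
    · rw [abs_of_nonneg h]; push_cast; ring
    · rw [abs_of_neg (not_le.mp h)]; push_cast; ring
  have hmuDs : Matrix.diagonal (RCLike.ofReal ∘ mu) * Ds = Dabs := by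
    rw [hDs, hDabs, Matrix.diagonal_mul_diagonal]
    apply congrArg Matrix.diagonal
    funext i
    simp only [Function.comp_apply, hsdef, rclike_ofReal_eq]
    split_ifs with h
    · rw [abs_of_nonneg h]; push_cast; ring
    · rw [abs_of_neg (not_le.mp h)]; push_cast; ring
  have hsand : ∀ D E : Matrix (Fin m) (Fin m) ℂ,
      ((U : Matrix (Fin m) (Fin m) ℂ) * D * star (U : Matrix (Fin m) (Fin m) ℂ)) *
        ((U : Matrix (Fin m) (Fin m) ℂ) * E * star (U : Matrix (Fin m) (Fin m) ℂ))
      = (U : Matrix (Fin m) (Fin m) ℂ) * (D * E) * star (U : Matrix (Fin m) (Fin m) ℂ) := by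
    intro D E
    calc (U : Matrix (Fin m) (Fin m) ℂ) * D * star (U : Matrix (Fin m) (Fin m) ℂ) *
          ((U : Matrix (Fin m) (Fin m) ℂ) * E * star (U : Matrix (Fin m) (Fin m) ℂ))
        = (U : Matrix (Fin m) (Fin m) ℂ) * D *
            ((star (U : Matrix (Fin m) (Fin m) ℂ) * (U : Matrix (Fin m) (Fin m) ℂ)) *
              (E * star (U : Matrix (Fin m) (Fin m) ℂ))) := by simp only [Matrix.mul_assoc]
      _ = (U : Matrix (Fin m) (Fin m) ℂ) * (D * E) * star (U : Matrix (Fin m) (Fin m) ℂ) := by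
          rw [hU2, Matrix.one_mul]; simp only [Matrix.mul_assoc]
  have hWX : W * X = absX := by
    rw [hW, hspec, hsand, hDsmu]
  have hXW : X * W = absX := by
    rw [hW, hspec, hsand, hmuDs]
  have hWunit : Wᴴ * W = 1 := by
    have hDsH : Dsᴴ = Ds := by
      rw [hDs, Matrix.diagonal_conjTranspose]
      apply congrArg Matrix.diagonal
      funext i
      simp [Function.comp_apply, Complex.star_def, Complex.conj_ofReal]
    have hWH : Wᴴ = W := by
      rw [hW]
      simp only [Matrix.conjTranspose_mul, Matrix.conjTranspose_conjTranspose,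
        Matrix.star_eq_conjTranspose, hDsH]
      rw [Matrix.mul_assoc]
    rw [hWH, hW, hsand]
    have hDs2 : Ds * Ds = 1 := by
      rw [hDs, Matrix.diagonal_mul_diagonal, ← Matrix.diagonal_one]
      apply congrArg Matrix.diagonal
      funext i
      simp only [hsdef]
      split_ifs <;> norm_num
    rw [hDs2, Matrix.mul_one, hU1]
  -- trace computations
  have step1 : (((a - b) * (a - b)).trace).re
      ≤ ((absX * a).trace).re + ((absX * b).trace).re := by
    have e1 : (a - b) * (a - b) = X * a - X * b := by rw [← hXdef, Matrix.mul_sub]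
    have h1 : 0 ≤ (((absX - X) * a).trace).re := psd_mul_trace_re_nonneg hsub ha
    have h2 : 0 ≤ (((absX + X) * b).trace).re := psd_mul_trace_re_nonneg hadd hb
    rw [Matrix.sub_mul, Matrix.trace_sub, Complex.sub_re] at h1
    rw [Matrix.add_mul, Matrix.trace_add, Complex.add_re] at h2
    rw [e1, Matrix.trace_sub, Complex.sub_re]
    linarith
  have step2 : ((absX * a).trace).re + ((absX * b).trace).re
      = ((absX * (a + b)).trace).re := by
    rw [Matrix.mul_add, Matrix.trace_add, Complex.add_re]
  have step3 : (absX * (a + b)).trace = (W * C).trace := by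
    have hCC : X * (a + b) + (a + b) * X = C + C := by
      rw [hXdef, hCdef]
      noncomm_ring
    have e1 : (W * (X * (a + b))).trace = (absX * (a + b)).trace := by
      rw [← Matrix.mul_assoc, hWX]
    have e2 : (W * ((a + b) * X)).trace = (absX * (a + b)).trace := by
      rw [Matrix.trace_mul_comm W ((a + b) * X), Matrix.mul_assoc (a + b) X W, hXW]
      exact Matrix.trace_mul_comm _ _
    have e3 : (absX * (a + b)).trace + (absX * (a + b)).trace
        = (W * C).trace + (W * C).trace := by
      calc (absX * (a + b)).trace + (absX * (a + b)).trace
          = (W * (X * (a + b))).trace + (W * ((a + b) * X)).trace := by rw [e1, e2]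
        _ = (W * (X * (a + b)) + W * ((a + b) * X)).trace := (Matrix.trace_add _ _).symm
        _ = (W * (C + C)).trace := by rw [← Matrix.mul_add, hCC]
        _ = (W * C + W * C).trace := by rw [Matrix.mul_add]
        _ = (W * C).trace + (W * C).trace := Matrix.trace_add _ _
    linear_combination e3 / 2
  have step4 : ((W * C).trace).re ≤ ((psdSqrt (Cᴴ * C)).trace).re := by
    have h1 := trace_re_le_psdSqrt (W * C)
    have h2 : (W * C)ᴴ * (W * C) = Cᴴ * C := by
      rw [Matrix.conjTranspose_mul, Matrix.mul_assoc, ← Matrix.mul_assoc Wᴴ W C, hWunit,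
        Matrix.one_mul]
    rwa [h2] at h1
  calc (((a - b) * (a - b)).trace).re
      ≤ ((absX * a).trace).re + ((absX * b).trace).re := step1
    _ = ((absX * (a + b)).trace).re := step2
    _ = ((W * C).trace).re := by rw [step3]
    _ ≤ ((psdSqrt (Cᴴ * C)).trace).re := step4

end Aux

/-- For any two density matrices, one minus the fidelity is a lower bound on the
trace distance. -/
theorem one_sub_fidelity_le_traceDist {m : ℕ} (ρ σ : Matrix (Fin m) (Fin m) ℂ)
    (hρ : ρ.PosSemidef) (hσ : σ.PosSemidef) (hρ1 : ρ.trace = 1) (hσ1 : σ.trace = 1) :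
    1 - fidelity ρ σ ≤ traceDist ρ σ := by
  set a := hρ.sqrt with ha
  set b := hσ.sqrt with hb
  have haH : aᴴ = a := hρ.posSemidef_sqrt.1.eq
  have hbH : bᴴ = b := hσ.posSemidef_sqrt.1.eq
  have haa : a * a = ρ := hρ.sqrt_mul_self
  have hbb : b * b = σ := hσ.sqrt_mul_self
  -- fidelity lower bound
  have hM : (b * a)ᴴ * (b * a) = a * σ * a := by
    rw [Matrix.conjTranspose_mul, haH, hbH, Matrix.mul_assoc, ← Matrix.mul_assoc b b a, hbb,
      ← Matrix.mul_assoc]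
  have hfid : ((b * a).trace).re ≤ fidelity ρ σ := by
    have h1 := trace_re_le_psdSqrt (b * a)
    rw [hM] at h1
    rw [fidelity, psdSqrt_of_posSemidef hρ, ← ha]
    exact h1
  -- Powers–Størmer
  have hps := powers_stormer hρ.posSemidef_sqrt hσ.posSemidef_sqrt
  rw [haa, hbb] at hps
  -- compute trace of (a-b)²
  have hexp : ((a - b) * (a - b)).trace
      = ρ.trace + σ.trace - (b * a).trace - (b * a).trace := by
    have e : (a - b) * (a - b) = a * a - a * b - b * a + b * b := by noncomm_ring
    rw [e, haa, hbb, Matrix.trace_add, Matrix.trace_sub, Matrix.trace_sub,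
      Matrix.trace_mul_comm a b]
    ring
  have hexp' : (((a - b) * (a - b)).trace).re = 2 - 2 * ((b * a).trace).re := by
    rw [hexp, hρ1, hσ1]
    simp [Complex.sub_re]
    ring
  rw [hexp'] at hps
  rw [traceDist]
  linarith
end

section
/- Let u, v, w be unit vectors in a complex inner product space. Then |⟨u,w⟩|² + |⟨v,w⟩|² ≤ 1 + |⟨u,v⟩|. (Pure-state form of the fidelity inequality, used in the soundness analysis of the 7-turn-to-5-turn parallelization theorem: the two acceptance probabilities p₀ = |⟨u,w⟩|² and p₁ = |⟨v,w⟩|² sum to at most 1 plus the overlap |⟨u,v⟩|.) -/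
/-- For unit vectors `u v w` in a complex inner product space,
`|⟨u,w⟩|² + |⟨v,w⟩|² ≤ 1 + |⟨u,v⟩|`. -/
theorem abs_inner_sq_add_abs_inner_sq_le {H : Type*} [NormedAddCommGroup H]
    [InnerProductSpace ℂ H] (u v w : H) (hu : ‖u‖ = 1) (hv : ‖v‖ = 1) (hw : ‖w‖ = 1) :
    ‖(inner ℂ u w : ℂ)‖ ^ 2 + ‖(inner ℂ v w : ℂ)‖ ^ 2 ≤ 1 + ‖(inner ℂ u v : ℂ)‖ := by
  set a : ℂ := inner ℂ u w with ha
  set b : ℂ := inner ℂ v w with hb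
  set g : ℂ := inner ℂ u v with hg
  set s : ℝ := ‖a‖ ^ 2 + ‖b‖ ^ 2 with hsdef
  set x : H := a • u + b • v with hx
  have h1 : (inner ℂ x w : ℂ) = (s : ℂ) := by
    simp [hx, inner_add_left, inner_smul_left, ← ha, ← hb, RCLike.conj_mul, RCLike.mul_conj, hsdef]
  have h2 : ‖(inner ℂ x w : ℂ)‖ ≤ ‖x‖ := by
    calc ‖(inner ℂ x w : ℂ)‖ ≤ ‖x‖ * ‖w‖ := norm_inner_le_norm x w
    _ = ‖x‖ := by rw [hw, mul_one]
  have hs0 : (0:ℝ) ≤ s := by positivity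
  have h1' : s ≤ ‖x‖ := by
    rwa [h1, Complex.norm_real, Real.norm_of_nonneg hs0] at h2
  have h3 : ‖x‖ ^ 2 = ‖a • u‖ ^ 2 + 2 * Complex.re (inner ℂ (a • u) (b • v)) + ‖b • v‖ ^ 2 :=
    by
    have := norm_add_sq (𝕜 := ℂ) (a • u) (b • v)
    exact this
  have h4 : (inner ℂ (a • u) (b • v) : ℂ) = (starRingEnd ℂ) a * b * g := by
    rw [inner_smul_left, inner_smul_right, hg]; ring
  have h5 : Complex.re ((starRingEnd ℂ) a * b * g) ≤ ‖a‖ * ‖b‖ * ‖g‖ := by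
    calc Complex.re ((starRingEnd ℂ) a * b * g) ≤ ‖(starRingEnd ℂ) a * b * g‖ :=
      Complex.re_le_norm _
    _ = ‖a‖ * ‖b‖ * ‖g‖ := by simp [norm_mul]
  have h6 : ‖x‖ ^ 2 ≤ s + 2 * (‖a‖ * ‖b‖ * ‖g‖) := by
    rw [h3, h4, norm_smul, norm_smul, hu, hv]
    nlinarith [h5]
  have hg0 : (0:ℝ) ≤ ‖g‖ := norm_nonneg g
  have hab : 2 * (‖a‖ * ‖b‖) ≤ s := by nlinarith [sq_nonneg (‖a‖ - ‖b‖)]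
  have hkey : s ^ 2 ≤ s * (1 + ‖g‖) := by nlinarith [h1', norm_nonneg x]
  nlinarith [hkey, hs0, hg0]
end

section
/- Let P and I be finite nonempty index sets. Let a₀, a₁ : P → ℂ be vectors with ℓ² norm at most 1, and let ψ, φ : I → ℂ be unit vectors (ℓ² norm 1). Define the vector v : P × I × I → ℂ by v(p,i,j) = (1/2)(a₀(p)·ψ(i)·φ(j) + a₁(p)·φ(i)·ψ(j)). Then the squared ℓ² norm of v is at most (1/2) + (1/2)·|⟨ψ,φ⟩|². (Core inequality in the soundness proof of the distributed SWAP-test protocol: no prover action can make the acceptance probability exceed (1/2)(1 + |⟨ψ|φ⟩|²).) -/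
lemma sum3_aux {P I : Type*} [Fintype P] [Fintype I] {R : Type*} [CommSemiring R]
    (f : P → R) (g h : I → R) :
    ∑ x : P × I × I, f x.1 * g x.2.1 * h x.2.2
      = (∑ p, f p) * ((∑ i, g i) * (∑ j, h j)) := by
  rw [Fintype.sum_prod_type]
  simp_rw [Fintype.sum_prod_type, mul_assoc, ← Finset.mul_sum, ← Finset.sum_mul]



/-- Core inequality in the soundness proof of the distributed SWAP-test protocol: if
`a₀, a₁ : P → ℂ` have ℓ² norm at most 1 and `ψ, φ : I → ℂ` are ℓ²-unit vectors, then the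
vector `v(p,i,j) = (1/2)(a₀(p)ψ(i)φ(j) + a₁(p)φ(i)ψ(j))` has squared ℓ² norm at most
`1/2 + (1/2)|⟨ψ,φ⟩|²`. -/
theorem swap_test_soundness {P I : Type*} [Fintype P] [Fintype I] [Nonempty P] [Nonempty I]
    (a₀ a₁ : P → ℂ) (ψ φ : I → ℂ)
    (ha₀ : ∑ p, ‖a₀ p‖ ^ 2 ≤ 1) (ha₁ : ∑ p, ‖a₁ p‖ ^ 2 ≤ 1)
    (hψ : ∑ i, ‖ψ i‖ ^ 2 = 1) (hφ : ∑ i, ‖φ i‖ ^ 2 = 1) :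
    ∑ x : P × I × I,
        ‖(1 / 2 : ℂ) * (a₀ x.1 * ψ x.2.1 * φ x.2.2 + a₁ x.1 * φ x.2.1 * ψ x.2.2)‖ ^ 2
      ≤ 1 / 2 + 1 / 2 * ‖∑ i, (starRingEnd ℂ) (ψ i) * φ i‖ ^ 2 := by
  set c : ℂ := ∑ i, (starRingEnd ℂ) (ψ i) * φ i with hc
  have key : ∀ z w : ℂ, ‖(1/2:ℂ)*(z+w)‖^2
      = 1/4*(‖z‖^2 + ‖w‖^2 + 2*(z*(starRingEnd ℂ) w).re) := by
    intro z w
    rw [norm_mul, mul_pow]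
    simp only [Complex.sq_norm, Complex.normSq_add]
    norm_num
  simp only [key]
  have hS1 : ∑ x : P × I × I, ‖a₀ x.1 * ψ x.2.1 * φ x.2.2‖^2
      = (∑ p, ‖a₀ p‖^2) * ((∑ i, ‖ψ i‖^2) * (∑ j, ‖φ j‖^2)) := by
    simp_rw [norm_mul, mul_pow]
    exact sum3_aux (fun p => ‖a₀ p‖^2) (fun i => ‖ψ i‖^2) (fun j => ‖φ j‖^2)
  have hS2 : ∑ x : P × I × I, ‖a₁ x.1 * φ x.2.1 * ψ x.2.2‖^2
      = (∑ p, ‖a₁ p‖^2) * ((∑ i, ‖φ i‖^2) * (∑ j, ‖ψ j‖^2)) := by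
    simp_rw [norm_mul, mul_pow]
    exact sum3_aux (fun p => ‖a₁ p‖^2) (fun i => ‖φ i‖^2) (fun j => ‖ψ j‖^2)
  set t : ℂ := ∑ p, a₀ p * (starRingEnd ℂ) (a₁ p) with ht
  have hT : ∑ x : P × I × I,
      ((a₀ x.1 * ψ x.2.1 * φ x.2.2) * (starRingEnd ℂ) (a₁ x.1 * φ x.2.1 * ψ x.2.2))
      = t * ((‖c‖^2 : ℝ) : ℂ) := by
    have h1 : ∀ x : P × I × I,
        (a₀ x.1 * ψ x.2.1 * φ x.2.2) * (starRingEnd ℂ) (a₁ x.1 * φ x.2.1 * ψ x.2.2)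
        = (fun p => a₀ p * (starRingEnd ℂ) (a₁ p)) x.1
            * (fun i => ψ i * (starRingEnd ℂ) (φ i)) x.2.1
            * (fun j => φ j * (starRingEnd ℂ) (ψ j)) x.2.2 := by
      intro x; simp only [map_mul]; ring
    rw [Finset.sum_congr rfl fun x _ => h1 x]
    rw [sum3_aux (fun p => a₀ p * (starRingEnd ℂ) (a₁ p))
      (fun i => ψ i * (starRingEnd ℂ) (φ i)) (fun j => φ j * (starRingEnd ℂ) (ψ j))]
    have h2 : (∑ i, ψ i * (starRingEnd ℂ) (φ i)) = (starRingEnd ℂ) c := by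
      rw [hc, map_sum]; simp [mul_comm]
    have h3 : (∑ j, φ j * (starRingEnd ℂ) (ψ j)) = c := by
      rw [hc]; exact Finset.sum_congr rfl fun j _ => mul_comm _ _
    rw [h2, h3, ht]
    congr 1
    rw [mul_comm, Complex.mul_conj, Complex.sq_norm]
  have ht1 : t.re ≤ 1 := by
    have h4 : ‖t‖ ≤ ∑ p, ‖a₀ p‖ * ‖a₁ p‖ := by
      refine (norm_sum_le _ _).trans_eq ?_
      exact Finset.sum_congr rfl fun p _ => by
        rw [norm_mul, RingHomIsometric.norm_map]
    have h5 : (∑ p, ‖a₀ p‖ * ‖a₁ p‖)^2 ≤ (∑ p, ‖a₀ p‖^2) * (∑ p, ‖a₁ p‖^2) :=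
      Finset.sum_mul_sq_le_sq_mul_sq _ _ _
    have h6 : (0:ℝ) ≤ ∑ p, ‖a₀ p‖ * ‖a₁ p‖ :=
      Finset.sum_nonneg fun p _ => by positivity
    have h7 := Complex.re_le_norm t
    have h8 : (0:ℝ) ≤ ∑ p, ‖a₀ p‖^2 := Finset.sum_nonneg fun p _ => by positivity
    have h9 : (0:ℝ) ≤ ∑ p, ‖a₁ p‖^2 := Finset.sum_nonneg fun p _ => by positivity
    have habs : ‖t‖ = ‖t‖ := rfl
    nlinarith
  rw [← Finset.mul_sum]
  simp_rw [Finset.sum_add_distrib, ← Finset.mul_sum, ← Complex.re_sum]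
  rw [hS1, hS2, hT, hψ, hφ]
  have hre : (t * ((‖c‖^2 : ℝ) : ℂ)).re = t.re * ‖c‖^2 := by
    simp [Complex.mul_re, ← Complex.ofReal_pow]
  rw [hre]
  have hc2 : (0:ℝ) ≤ ‖c‖^2 := by positivity
  nlinarith
end

section
/- Let P and I be finite nonempty index sets. Let α : P → ℂ be a unit vector and let ψ, φ : I → ℂ be unit vectors. Define v : P × I × I → ℂ by v(p,i,j) = (1/2)(α(p)·ψ(i)·φ(j) + α(p)·φ(i)·ψ(j)). Then the squared ℓ² norm of v equals exactly (1/2) + (1/2)·|⟨ψ,φ⟩|². (Equality case of the distributed SWAP-test acceptance bound, attained by the honest prover; in particular the acceptance probability is 1 when ψ = φ.) -/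
/-- Equality case of the distributed SWAP-test acceptance bound, attained by the honest
prover: if `α : P → ℂ` and `ψ, φ : I → ℂ` are ℓ²-unit vectors, then the vector
`v(p,i,j) = (1/2)(α(p)ψ(i)φ(j) + α(p)φ(i)ψ(j))` has squared ℓ² norm exactly
`1/2 + (1/2)|⟨ψ,φ⟩|²`. -/
theorem swap_test_completeness {P I : Type*} [Fintype P] [Fintype I] [Nonempty P] [Nonempty I]
    (α : P → ℂ) (ψ φ : I → ℂ)
    (hα : ∑ p, ‖α p‖ ^ 2 = 1)
    (hψ : ∑ i, ‖ψ i‖ ^ 2 = 1) (hφ : ∑ i, ‖φ i‖ ^ 2 = 1) :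
    ∑ x : P × I × I,
        ‖(1 / 2 : ℂ) * (α x.1 * ψ x.2.1 * φ x.2.2 + α x.1 * φ x.2.1 * ψ x.2.2)‖ ^ 2
      = 1 / 2 + 1 / 2 * ‖∑ i, (starRingEnd ℂ) (ψ i) * φ i‖ ^ 2 := by
  have hns : ∀ z : ℂ, ((‖z‖ ^ 2 : ℝ) : ℂ) = z * (starRingEnd ℂ) z := by
    intro z
    rw [Complex.mul_conj, Complex.normSq_eq_norm_sq]
  have hv : ∀ z : ℂ, ((‖z‖ : ℂ)) ^ 2 = z * (starRingEnd ℂ) z := by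
    intro z; rw [← Complex.ofReal_pow]; exact hns z
  have factor : ∀ (F : P → ℂ) (G H : I → ℂ),
      ∑ x : P × I × I, F x.1 * G x.2.1 * H x.2.2
        = (∑ p, F p) * (∑ i, G i) * (∑ j, H j) := by
    intro F G H
    simp_rw [Fintype.sum_prod_type, mul_assoc, ← Finset.mul_sum, ← Finset.sum_mul]
  have hA : ∑ p, α p * (starRingEnd ℂ) (α p) = 1 := by
    have : ∀ p, α p * (starRingEnd ℂ) (α p) = ((‖α p‖ ^ 2 : ℝ) : ℂ) := fun p => (hns _).symm
    simp only [this]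
    rw [← Complex.ofReal_sum, hα, Complex.ofReal_one]
  have hB : ∑ i, ψ i * (starRingEnd ℂ) (ψ i) = 1 := by
    have : ∀ i, ψ i * (starRingEnd ℂ) (ψ i) = ((‖ψ i‖ ^ 2 : ℝ) : ℂ) := fun i => (hns _).symm
    simp only [this]
    rw [← Complex.ofReal_sum, hψ, Complex.ofReal_one]
  have hC : ∑ i, φ i * (starRingEnd ℂ) (φ i) = 1 := by
    have : ∀ i, φ i * (starRingEnd ℂ) (φ i) = ((‖φ i‖ ^ 2 : ℝ) : ℂ) := fun i => (hns _).symm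
    simp only [this]
    rw [← Complex.ofReal_sum, hφ, Complex.ofReal_one]
  set s := ∑ i, (starRingEnd ℂ) (ψ i) * φ i with hs
  have h2 : ∑ i, ψ i * (starRingEnd ℂ) (φ i) = (starRingEnd ℂ) s := by
    rw [hs, map_sum]
    exact Finset.sum_congr rfl fun i _ => by
      rw [map_mul, RingHomInvPair.comp_apply_eq₂, mul_comm]
  have h3 : ∑ j, φ j * (starRingEnd ℂ) (ψ j) = s := by
    rw [hs]; exact Finset.sum_congr rfl fun i _ => mul_comm _ _
  rw [← Complex.ofReal_inj]
  push_cast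
  simp only [hv]
  calc ∑ x : P × I × I,
        ((1 / 2 : ℂ) * (α x.1 * ψ x.2.1 * φ x.2.2 + α x.1 * φ x.2.1 * ψ x.2.2)) *
          (starRingEnd ℂ) ((1 / 2 : ℂ) * (α x.1 * ψ x.2.1 * φ x.2.2 + α x.1 * φ x.2.1 * ψ x.2.2))
      = ∑ x : P × I × I, ((1/4 : ℂ) *
          ((fun p => α p * (starRingEnd ℂ) (α p)) x.1 *
             (fun i => ψ i * (starRingEnd ℂ) (ψ i)) x.2.1 *
             (fun j => φ j * (starRingEnd ℂ) (φ j)) x.2.2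
          + (fun p => α p * (starRingEnd ℂ) (α p)) x.1 *
             (fun i => ψ i * (starRingEnd ℂ) (φ i)) x.2.1 *
             (fun j => φ j * (starRingEnd ℂ) (ψ j)) x.2.2
          + (fun p => α p * (starRingEnd ℂ) (α p)) x.1 *
             (fun i => φ i * (starRingEnd ℂ) (ψ i)) x.2.1 *
             (fun j => ψ j * (starRingEnd ℂ) (φ j)) x.2.2
          + (fun p => α p * (starRingEnd ℂ) (α p)) x.1 *
             (fun i => φ i * (starRingEnd ℂ) (φ i)) x.2.1 *
             (fun j => ψ j * (starRingEnd ℂ) (ψ j)) x.2.2)) := by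
        refine Finset.sum_congr rfl fun x _ => ?_
        simp only [map_mul, map_add, map_div₀, map_one, map_ofNat]
        ring
    _ = (1/4 : ℂ) * ((∑ p, α p * (starRingEnd ℂ) (α p)) * (∑ i, ψ i * (starRingEnd ℂ) (ψ i)) * (∑ j, φ j * (starRingEnd ℂ) (φ j))
          + (∑ p, α p * (starRingEnd ℂ) (α p)) * (∑ i, ψ i * (starRingEnd ℂ) (φ i)) * (∑ j, φ j * (starRingEnd ℂ) (ψ j))
          + (∑ p, α p * (starRingEnd ℂ) (α p)) * (∑ i, φ i * (starRingEnd ℂ) (ψ i)) * (∑ j, ψ j * (starRingEnd ℂ) (φ j))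
          + (∑ p, α p * (starRingEnd ℂ) (α p)) * (∑ i, φ i * (starRingEnd ℂ) (φ i)) * (∑ j, ψ j * (starRingEnd ℂ) (ψ j))) := by
        rw [← Finset.mul_sum, Finset.sum_add_distrib, Finset.sum_add_distrib,
          Finset.sum_add_distrib,
          factor (fun p => α p * (starRingEnd ℂ) (α p)) (fun i => ψ i * (starRingEnd ℂ) (ψ i))
            (fun j => φ j * (starRingEnd ℂ) (φ j)),
          factor (fun p => α p * (starRingEnd ℂ) (α p)) (fun i => ψ i * (starRingEnd ℂ) (φ i))
            (fun j => φ j * (starRingEnd ℂ) (ψ j)),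
          factor (fun p => α p * (starRingEnd ℂ) (α p)) (fun i => φ i * (starRingEnd ℂ) (ψ i))
            (fun j => ψ j * (starRingEnd ℂ) (φ j)),
          factor (fun p => α p * (starRingEnd ℂ) (α p)) (fun i => φ i * (starRingEnd ℂ) (φ i))
            (fun j => ψ j * (starRingEnd ℂ) (ψ j))]
    _ = 1 / 2 + 1 / 2 * (s * (starRingEnd ℂ) s) := by
        simp only [hA, hB, hC, h2, h3]
        ring
end

section
/- Let H be a complex inner product space, let ψ ∈ H be a unit vector, let Q₀, Q₁ : H → H be unitary operators, and let Π₀, Π₁ : H → H be orthogonal projections. Assume Π₁Q₁ψ ≠ 0 and set β = Π₁Q₁ψ / ‖Π₁Q₁ψ‖. Then (1/2)(‖Π₀Q₀ψ‖² + ‖Π₁Q₁ψ‖²) ≤ (1/2)(1 + ‖Π₀ Q₀ Q₁† β‖). (Soundness inequality in the proof that 7-turn distributed quantum interactive protocols can be parallelized to 5 turns: the average of the acceptance probabilities of the two branches chosen by the random bit is bounded by one half plus half the norm of the accepted part of the composed evolution applied to the renormalized state β.) -/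
section aux

variable {H : Type*} [NormedAddCommGroup H] [InnerProductSpace ℂ H]

lemma proj_pythag (T : H →ₗ[ℂ] H) (hidem : T ∘ₗ T = T)
    (hsa : ∀ x y : H, (inner ℂ (T x) y : ℂ) = inner ℂ x (T y)) (x : H) :
    ‖T x‖ ^ 2 + ‖x - T x‖ ^ 2 = ‖x‖ ^ 2 := by
  have hTT : T (T x) = T x := by
    have := congrArg (fun f : H →ₗ[ℂ] H => f x) hidem
    simpa using this
  have h1 : (inner ℂ (T x) x : ℂ) = inner ℂ (T x) (T x) := by
    conv_lhs => rw [← hTT]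
    exact hsa (T x) x
  have horth : (inner ℂ (T x) (x - T x) : ℂ) = 0 := by
    rw [inner_sub_right, h1, sub_self]
  have hns := @norm_add_sq ℂ H _ _ _ (T x) (x - T x)
  have hx : T x + (x - T x) = x := by abel
  rw [hx, horth] at hns
  simp only [map_zero, mul_zero, add_zero] at hns
  linarith

lemma inner_proj_decomp (T : H →ₗ[ℂ] H) (hidem : T ∘ₗ T = T)
    (hsa : ∀ x y : H, (inner ℂ (T x) y : ℂ) = inner ℂ x (T y)) (w φ : H) :
    (inner ℂ w φ : ℂ) = inner ℂ (T w) (T φ) + inner ℂ (w - T w) (φ - T φ) := by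
  have hTT : T (T φ) = T φ := by
    have := congrArg (fun f : H →ₗ[ℂ] H => f φ) hidem
    simpa using this
  have h1 : (inner ℂ (T w) (T φ) : ℂ) = inner ℂ w (T φ) := by
    rw [hsa, hTT]
  have h2 : (inner ℂ (T w) φ : ℂ) = inner ℂ w (T φ) := hsa _ _
  rw [inner_sub_left, inner_sub_right, inner_sub_right, h1, h2]
  ring

/-- Key abstract inequality: for an orthogonal projection `T` and unit vectors
`φ, w`, `‖Tφ‖² + |⟨w,φ⟩|² ≤ 1 + ‖Tw‖`. -/
lemma key_ineq (T : H →ₗ[ℂ] H) (hidem : T ∘ₗ T = T)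
    (hsa : ∀ x y : H, (inner ℂ (T x) y : ℂ) = inner ℂ x (T y))
    (φ w : H) (hφ : ‖φ‖ = 1) (hw : ‖w‖ = 1) :
    ‖T φ‖ ^ 2 + ‖(inner ℂ w φ : ℂ)‖ ^ 2 ≤ 1 + ‖T w‖ := by
  set a := ‖T φ‖ with ha
  set a' := ‖φ - T φ‖ with ha'
  set c := ‖T w‖ with hc
  set c' := ‖w - T w‖ with hc'
  have h1 : a ^ 2 + a' ^ 2 = 1 := by
    have := proj_pythag T hidem hsa φ; rw [hφ] at this; simpa using this
  have h2 : c ^ 2 + c' ^ 2 = 1 := by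
    have := proj_pythag T hidem hsa w; rw [hw] at this; simpa using this
  have hb : ‖(inner ℂ w φ : ℂ)‖ ≤ c * a + c' * a' := by
    rw [inner_proj_decomp T hidem hsa w φ]
    calc ‖(inner ℂ (T w) (T φ) : ℂ) + inner ℂ (w - T w) (φ - T φ)‖
        ≤ ‖(inner ℂ (T w) (T φ) : ℂ)‖ + ‖(inner ℂ (w - T w) (φ - T φ) : ℂ)‖ :=
          norm_add_le _ _
      _ ≤ c * a + c' * a' := by
          gcongr <;> exact norm_inner_le_norm _ _
  have ha0 : 0 ≤ a := norm_nonneg _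
  have ha'0 : 0 ≤ a' := norm_nonneg _
  have hc0 : 0 ≤ c := norm_nonneg _
  have hc'0 : 0 ≤ c' := norm_nonneg _
  have hb0 : 0 ≤ ‖(inner ℂ w φ : ℂ)‖ := norm_nonneg _
  have hca : 0 ≤ c * a + c' * a' := by positivity
  have hb2 : ‖(inner ℂ w φ : ℂ)‖ ^ 2 ≤ (c * a + c' * a') ^ 2 := by
    exact pow_le_pow_left₀ hb0 hb 2
  -- Cauchy–Schwarz style bound: X := c(a²-a'²) + 2aa'c' satisfies X ≤ 1
  have h12 : ((a ^ 2 + a' ^ 2) ^ 2) * (c ^ 2 + c' ^ 2) = 1 := by rw [h1, h2]; ring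
  have hX : c * (a ^ 2 - a' ^ 2) + 2 * a * a' * c' ≤ 1 := by
    nlinarith [sq_nonneg (c * (a ^ 2 - a' ^ 2) + 2 * a * a' * c' - 1),
      sq_nonneg (c' * (a ^ 2 - a' ^ 2) - 2 * a * a' * c), h12]
  have hfin : 0 ≤ c * (1 - (c * (a ^ 2 - a' ^ 2) + 2 * a * a' * c')) :=
    mul_nonneg hc0 (by linarith)
  nlinarith [hb2, hfin, h1, h2, sq_nonneg (a - a'), sq_nonneg (c - c')]

end aux

/-- Soundness inequality in the proof that 7-turn distributed quantum interactive protocols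
can be parallelized to 5 turns: for a unit vector `ψ`, unitaries `Q₀ Q₁` and orthogonal
projections `T₀ T₁` (self-adjoint idempotents) with `T₁ (Q₁ ψ) ≠ 0`, setting
`β = T₁(Q₁ψ)/‖T₁(Q₁ψ)‖`, the average `(1/2)(‖T₀Q₀ψ‖² + ‖T₁Q₁ψ‖²)` is at most
`(1/2)(1 + ‖T₀ Q₀ Q₁† β‖)`. -/
theorem seven_to_five_soundness {H : Type*} [NormedAddCommGroup H] [InnerProductSpace ℂ H]
    (ψ : H) (hψ : ‖ψ‖ = 1) (Q₀ Q₁ : H ≃ₗᵢ[ℂ] H) (T₀ T₁ : H →ₗ[ℂ] H)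
    (hT₀idem : T₀ ∘ₗ T₀ = T₀) (hT₀sa : ∀ x y : H, (inner ℂ (T₀ x) y : ℂ) = inner ℂ x (T₀ y))
    (hT₁idem : T₁ ∘ₗ T₁ = T₁) (hT₁sa : ∀ x y : H, (inner ℂ (T₁ x) y : ℂ) = inner ℂ x (T₁ y))
    (hne : T₁ (Q₁ ψ) ≠ 0) :
    (1 / 2 : ℝ) * (‖T₀ (Q₀ ψ)‖ ^ 2 + ‖T₁ (Q₁ ψ)‖ ^ 2)
      ≤ (1 / 2) * (1 + ‖T₀ (Q₀ (Q₁.symm ((‖T₁ (Q₁ ψ)‖)⁻¹ • T₁ (Q₁ ψ))))‖) := by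
  set φ := Q₁ ψ with hφdef
  set b := ‖T₁ φ‖ with hbdef
  have hb0 : 0 < b := norm_pos_iff.mpr hne
  set w : H := (b : ℝ)⁻¹ • T₁ φ with hwdef
  have hφ1 : ‖φ‖ = 1 := by rw [hφdef, Q₁.norm_map, hψ]
  have hw1 : ‖w‖ = 1 := by
    rw [hwdef, norm_smul, norm_inv, Real.norm_eq_abs, abs_of_pos hb0,
      ← hbdef, inv_mul_cancel₀ hb0.ne']
  have hTT : T₁ (T₁ φ) = T₁ φ := by
    have := congrArg (fun f : H →ₗ[ℂ] H => f φ) hT₁idem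
    simpa using this
  have h1 : (inner ℂ (T₁ φ) φ : ℂ) = (b : ℂ) ^ 2 := by
    calc (inner ℂ (T₁ φ) φ : ℂ) = inner ℂ (T₁ (T₁ φ)) φ := by rw [hTT]
      _ = inner ℂ (T₁ φ) (T₁ φ) := hT₁sa _ _
      _ = ((‖T₁ φ‖ : ℂ)) ^ 2 := by
          rw [@inner_self_eq_norm_sq_to_K ℂ]; norm_num
  have hinner : (inner ℂ w φ : ℂ) = (b : ℂ) := by
    rw [hwdef, RCLike.real_smul_eq_coe_smul (K := ℂ), inner_smul_left, h1,
      RCLike.conj_ofReal]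
    have hbC : (b : ℂ) ≠ 0 := Complex.ofReal_ne_zero.mpr hb0.ne'
    push_cast
    field_simp
    ring_nf
    exact mul_inv_cancel₀ hbC
  have hinnorm : ‖(inner ℂ w φ : ℂ)‖ = b := by
    rw [hinner, Complex.norm_real, Real.norm_eq_abs, abs_of_pos hb0]
  set φ' : H := Q₀ (Q₁.symm φ) with hφ'def
  set w' : H := Q₀ (Q₁.symm w) with hw'def
  have hφ'1 : ‖φ'‖ = 1 := by rw [hφ'def, Q₀.norm_map, Q₁.symm.norm_map, hφ1]
  have hw'1 : ‖w'‖ = 1 := by rw [hw'def, Q₀.norm_map, Q₁.symm.norm_map, hw1]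
  have hinner' : (inner ℂ w' φ' : ℂ) = inner ℂ w φ := by
    rw [hφ'def, hw'def, Q₀.inner_map_map, Q₁.symm.inner_map_map]
  have hkey := key_ineq T₀ hT₀idem hT₀sa φ' w' hφ'1 hw'1
  rw [hinner', hinnorm] at hkey
  have hφ'ψ : φ' = Q₀ ψ := by rw [hφ'def, hφdef, Q₁.symm_apply_apply]
  rw [hφ'ψ] at hkey
  linarith
end
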